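/- Let a,b be positive real numbers with a ≥ b, and define the metric coefficient function h(r) = (1/4)·a²sin²(2r)/(a²cos²r + b²sin²r) on (0, π/2). Then the Gaussian curvature of the rotationally symmetric metric g = dr² + h(r)dθ², given by K(r) = -h''_{sqrt}(r)/h_{sqrt}(r) where h_{sqrt} = √h, equals (3a⁴ + 26a²b² + 3b⁴ + 4(a⁴-b⁴)cos 2r + (a²-b²)²cos 4r) / (2(a²+b² + (a²-b²)cos 2r)²). -/

import Mathlib

open Real Set

noncomputable def Dfun (a b x : ℝ) : ℝ := a^2 * Real.cos x ^ 2 + b^2 * Real.sin x ^ 2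

noncomputable def Nfun (a b x : ℝ) : ℝ :=
  a * Real.cos (2*x) * Dfun a b x + a * (a^2 - b^2) / 4 * Real.sin (2*x) ^ 2

noncomputable def F1 (a b x : ℝ) : ℝ := Nfun a b x / Real.sqrt (Dfun a b x) ^ 3

lemma Dfun_pos {a b : ℝ} (hb : 0 < b) (hab : b ≤ a) (x : ℝ) : 0 < Dfun a b x := by
  have h := Real.sin_sq_add_cos_sq x
  have hb2 : b^2 ≤ a^2 := by nlinarith
  have : 0 < b^2 := by positivity
  unfold Dfun
  nlinarith [sq_nonneg (Real.cos x), sq_nonneg (Real.sin x)]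

lemma hasDerivAt_Dfun (a b x : ℝ) :
    HasDerivAt (Dfun a b) ((b^2 - a^2) * Real.sin (2*x)) x := by
  have h1 : HasDerivAt (fun y => a^2 * Real.cos y ^ 2)
      (a^2 * (2 * Real.cos x ^ 1 * (-Real.sin x))) x :=
    ((Real.hasDerivAt_cos x).pow 2).const_mul _
  have h2 : HasDerivAt (fun y => b^2 * Real.sin y ^ 2)
      (b^2 * (2 * Real.sin x ^ 1 * Real.cos x)) x :=
    ((Real.hasDerivAt_sin x).pow 2).const_mul _
  have := h1.add h2
  refine this.congr_deriv ?_
  rw [Real.sin_two_mul]; ring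

lemma hasDerivAt_sin2 (x : ℝ) :
    HasDerivAt (fun y : ℝ => Real.sin (2*y)) (2 * Real.cos (2*x)) x := by
  have := (Real.hasDerivAt_sin (2*x)).comp x ((hasDerivAt_id x).const_mul 2)
  refine this.congr_deriv ?_
  simp [mul_comm]

lemma hasDerivAt_cos2 (x : ℝ) :
    HasDerivAt (fun y : ℝ => Real.cos (2*y)) (-2 * Real.sin (2*x)) x := by
  have := (Real.hasDerivAt_cos (2*x)).comp x ((hasDerivAt_id x).const_mul 2)
  refine this.congr_deriv ?_
  simp; ring

lemma hasDerivAt_Nfun {a b : ℝ} (hb : 0 < b) (hab : b ≤ a) (x : ℝ) :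
    HasDerivAt (Nfun a b) (-2 * a * Real.sin (2*x) * Dfun a b x) x := by
  have h1 : HasDerivAt (fun y => a * Real.cos (2*y) * Dfun a b y)
      (a * (-2 * Real.sin (2*x)) * Dfun a b x
        + a * Real.cos (2*x) * ((b^2 - a^2) * Real.sin (2*x))) x := by
    exact (((hasDerivAt_cos2 x).const_mul a).mul (hasDerivAt_Dfun a b x))
  have h2 : HasDerivAt (fun y => a * (a^2 - b^2) / 4 * Real.sin (2*y) ^ 2)
      (a * (a^2 - b^2) / 4 * (2 * Real.sin (2*x) ^ 1 * (2 * Real.cos (2*x)))) x :=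
    ((hasDerivAt_sin2 x).pow 2).const_mul _
  have := h1.add h2
  refine this.congr_deriv ?_
  ring

lemma hasDerivAt_sqrtD {a b : ℝ} (hb : 0 < b) (hab : b ≤ a) (x : ℝ) :
    HasDerivAt (fun y => Real.sqrt (Dfun a b y))
      ((b^2 - a^2) * Real.sin (2*x) / (2 * Real.sqrt (Dfun a b x))) x :=
  (hasDerivAt_Dfun a b x).sqrt (Dfun_pos hb hab x).ne'

lemma hasDerivAt_f {a b : ℝ} (hb : 0 < b) (hab : b ≤ a) (x : ℝ) :
    HasDerivAt (fun y => (1/2) * a * Real.sin (2*y) / Real.sqrt (Dfun a b y))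
      (F1 a b x) x := by
  have hDpos := Dfun_pos hb hab x
  have hu : 0 < Real.sqrt (Dfun a b x) := Real.sqrt_pos.mpr hDpos
  have hnum : HasDerivAt (fun y => (1/2) * a * Real.sin (2*y))
      ((1/2) * a * (2 * Real.cos (2*x))) x := (hasDerivAt_sin2 x).const_mul _
  have h := hnum.div (hasDerivAt_sqrtD hb hab x) hu.ne'
  refine h.congr_deriv ?_
  have hu2 : Real.sqrt (Dfun a b x) ^ 2 = Dfun a b x := Real.sq_sqrt hDpos.le
  set u := Real.sqrt (Dfun a b x) with hudef
  rw [F1, Nfun, ← hu2]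
  field_simp
  rw [Real.sqrt_sq hu.le]
  ring

lemma hasDerivAt_F1 {a b : ℝ} (hb : 0 < b) (hab : b ≤ a) (x : ℝ) :
    HasDerivAt (F1 a b)
      ((-2 * a * Real.sin (2*x) * Dfun a b x ^ 2
        + (3/2) * (a^2 - b^2) * Real.sin (2*x) * Nfun a b x)
        / Real.sqrt (Dfun a b x) ^ 5) x := by
  have hDpos := Dfun_pos hb hab x
  have hu : 0 < Real.sqrt (Dfun a b x) := Real.sqrt_pos.mpr hDpos
  have hden : HasDerivAt (fun y => Real.sqrt (Dfun a b y) ^ 3)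
      (3 * Real.sqrt (Dfun a b x) ^ 2
        * ((b^2 - a^2) * Real.sin (2*x) / (2 * Real.sqrt (Dfun a b x)))) x := by
    have := (hasDerivAt_sqrtD hb hab x).pow 3
    refine this.congr_deriv ?_
    norm_num
  have h := (hasDerivAt_Nfun hb hab x).div hden (by positivity)
  have hF1 : F1 a b = fun y => Nfun a b y / Real.sqrt (Dfun a b y) ^ 3 := rfl
  rw [hF1]
  refine h.congr_deriv ?_
  have hu2 : Real.sqrt (Dfun a b x) ^ 2 = Dfun a b x := Real.sq_sqrt hDpos.le
  set u := Real.sqrt (Dfun a b x) with hudef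
  rw [← hu2]
  field_simp
  ring

theorem stmt0 (a b : ℝ) (hb : 0 < b) (hab : b ≤ a)
    (f : ℝ → ℝ)
    (hf : ∀ r, f r = (1/2) * a * Real.sin (2*r) /
      Real.sqrt (a^2 * Real.cos r ^ 2 + b^2 * Real.sin r ^ 2)) :
    ∀ r ∈ Set.Ioo 0 (Real.pi/2),
      -(deriv (deriv f) r) / f r =
        (3*a^4 + 26*a^2*b^2 + 3*b^4 + 4*(a^4 - b^4) * Real.cos (2*r)
            + (a^2 - b^2)^2 * Real.cos (4*r)) /
          (2 * (a^2 + b^2 + (a^2 - b^2) * Real.cos (2*r))^2) := by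
  have ha : 0 < a := lt_of_lt_of_le hb hab
  have hfe : f = fun y => (1/2) * a * Real.sin (2*y) / Real.sqrt (Dfun a b y) :=
    funext fun y => by rw [hf]; rfl
  have hd1 : deriv f = F1 a b := funext fun y => by
    rw [hfe]; exact (hasDerivAt_f hb hab y).deriv
  intro r hr
  obtain ⟨hr0, hr1⟩ := hr
  have hs : 0 < Real.sin (2*r) := by
    apply Real.sin_pos_of_pos_of_lt_pi
    · linarith
    · linarith
  have hDpos := Dfun_pos hb hab r
  have hu : 0 < Real.sqrt (Dfun a b r) := Real.sqrt_pos.mpr hDpos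
  have hu2 : Real.sqrt (Dfun a b r) ^ 2 = Dfun a b r := Real.sq_sqrt hDpos.le
  have hd2 : deriv (deriv f) r =
      (-2 * a * Real.sin (2*r) * Dfun a b r ^ 2
        + (3/2) * (a^2 - b^2) * Real.sin (2*r) * Nfun a b r)
        / Real.sqrt (Dfun a b r) ^ 5 := by
    rw [hd1]; exact (hasDerivAt_F1 hb hab r).deriv
  rw [hd2]
  rw [hf r]
  rw [show a^2 * Real.cos r ^ 2 + b^2 * Real.sin r ^ 2 = Dfun a b r from rfl]
  -- express everything in terms of c := cos (2r)
  have hcD : Dfun a b r = ((a^2 + b^2) + (a^2 - b^2) * Real.cos (2*r)) / 2 := by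
    unfold Dfun
    have h1 : Real.cos (2*r) = 2 * Real.cos r ^ 2 - 1 := Real.cos_two_mul r
    have h2 : Real.sin r ^ 2 = 1 - Real.cos r ^ 2 := Real.sin_sq r
    rw [h1, h2]; ring
  have hc4 : Real.cos (4*r) = 2 * Real.cos (2*r) ^ 2 - 1 := by
    rw [show (4:ℝ)*r = 2*(2*r) by ring, Real.cos_two_mul]
  have hs2 : Real.sin (2*r) ^ 2 = 1 - Real.cos (2*r) ^ 2 := Real.sin_sq (2*r)
  have hdenpos : 0 < (a^2 + b^2) + (a^2 - b^2) * Real.cos (2*r) := by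
    have := hDpos
    rw [hcD] at this; linarith
  set u := Real.sqrt (Dfun a b r) with hudef
  have hu5 : u ^ 5 = Dfun a b r ^ 2 * u := by
    have : u ^ 5 = (u ^ 2) ^ 2 * u := by ring
    rw [this, hu2]
  rw [hu5, hc4, Nfun, hs2, hcD]
  field_simp
  ring
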